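/- Let A* ∈ ℂ^{N×n} be isometric and b ∈ ℝ^N a fixed vector with positive entries. Then the map S_f : y ↦ y + A*A(2 b⊙ω_y − y) − b⊙ω_y is Fréchet differentiable over ℝ at every y ∈ ℂ^N all of whose components are nonzero, and its derivative is the ℝ-linear map η ↦ Ω·[ (I − B*B) v + i (2 B*B − I)·((b/|y|) ⊙ Im(v)) ] where ω = ω_y (the componentwise phase of y), Ω·w := ω ⊙ w, v := conj(ω) ⊙ η, B := A·diag(ω) with A = (A*)^H, |y| is the componentwise modulus of y, and b/|y| is the componentwise quotient. -/

import Mathlib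

open Matrix Complex

noncomputable section

/-- The componentwise phase `z/|z|`. -/
noncomputable def phase (z : ℂ) : ℂ := z / (‖z‖ : ℂ)

/-- The Fourier-domain Douglas-Rachford map
`S_f(y) = y + A*A(2 b⊙ω_y − y) − b⊙ω_y`. -/
noncomputable def Sf {N n : ℕ} (Aadj : Matrix (Fin N) (Fin n) ℂ) (b : Fin N → ℝ)
    (y : Fin N → ℂ) : Fin N → ℂ :=
  fun j => y j
    + Aadj.mulVec (Aadjᴴ.mulVec (fun i => 2 * (b i : ℂ) * phase (y i) - y i)) j
    - (b j : ℂ) * phase (y j)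

/-- `B*B v` where `B = A·diag(ω)`. -/
noncomputable def BstarB {N n : ℕ} (Aadj : Matrix (Fin N) (Fin n) ℂ) (ω : Fin N → ℂ)
    (v : Fin N → ℂ) : Fin N → ℂ :=
  fun j => (starRingEnd ℂ) (ω j) * Aadj.mulVec (Aadjᴴ.mulVec (fun i => ω i * v i)) j

/-! ### Auxiliary material -/

/-- Multiplication by a complex constant as an `ℝ`-CLM. -/
noncomputable def mulC (c : ℂ) : ℂ →L[ℝ] ℂ := c • (ContinuousLinearMap.id ℂ ℂ).restrictScalars ℝ

@[simp] lemma mulC_apply (c w : ℂ) : mulC c w = c * w := by simp [mulC, smul_eq_mul]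

/-- The (real) Fréchet derivative of `phase` at `z ≠ 0`. -/
noncomputable def phaseD (z : ℂ) : ℂ →L[ℝ] ℂ :=
  (‖z‖)⁻¹ • (ContinuousLinearMap.id ℝ ℂ -
    (mulC (phase z)).comp (Complex.ofRealCLM.comp (Complex.reCLM.comp
      (mulC ((starRingEnd ℂ) (phase z))))))

lemma phaseD_apply (z w : ℂ) :
    phaseD z w = ((‖z‖ : ℝ) : ℂ)⁻¹ *
      (w - phase z * ((((starRingEnd ℂ) (phase z) * w).re : ℝ) : ℂ)) := by
  simp [phaseD, Complex.real_smul, mul_sub]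

lemma hasFDerivAt_phase (z : ℂ) (hz : z ≠ 0) : HasFDerivAt phase (phaseD z) z := by
  have ha : ‖z‖ ≠ 0 := by simpa using hz
  have hre : HasFDerivAt (fun w : ℂ => w.re) Complex.reCLM z := Complex.reCLM.hasFDerivAt
  have him : HasFDerivAt (fun w : ℂ => w.im) Complex.imCLM z := Complex.imCLM.hasFDerivAt
  have h1 : HasFDerivAt (fun w : ℂ => w.re * w.re + w.im * w.im)
      ((z.re • Complex.reCLM + z.re • Complex.reCLM) +
        (z.im • Complex.imCLM + z.im • Complex.imCLM)) z := (hre.mul hre).add (him.mul him)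
  have hS : z.re * z.re + z.im * z.im ≠ 0 := by
    have := Complex.normSq_pos.2 hz
    rw [Complex.normSq_apply] at this
    exact ne_of_gt this
  have h2 := (Real.hasDerivAt_sqrt hS).comp_hasFDerivAt z h1
  have habs_eq : (fun w : ℂ => ‖w‖)
      = fun w : ℂ => Real.sqrt (w.re * w.re + w.im * w.im) := by
    funext w; rw [Complex.norm_def, Complex.normSq_apply]
  have habs : HasFDerivAt (fun w : ℂ => ‖w‖)
      ((1 / (2 * Real.sqrt (z.re * z.re + z.im * z.im))) •
        ((z.re • Complex.reCLM + z.re • Complex.reCLM) +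
          (z.im • Complex.imCLM + z.im • Complex.imCLM))) z := by
    rw [habs_eq]; exact h2
  have h4 := (hasDerivAt_inv ha).comp_hasFDerivAt z habs
  have h5 := h4.smul (hasFDerivAt_id z)
  have hphase_eq : phase = fun w : ℂ => (‖w‖)⁻¹ • w := by
    funext w
    simp [phase, Complex.real_smul, div_eq_inv_mul]
  rw [hphase_eq]
  refine (h5.congr_fderiv ?_)
  symm
  have hsa : Real.sqrt (z.re * z.re + z.im * z.im) = ‖z‖ := by
    rw [Complex.norm_def, Complex.normSq_apply]
  ext w : 1
  rw [phaseD_apply]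
  have hcre : ((starRingEnd ℂ) (phase z) * w).re
      = (z.re * w.re + z.im * w.im) / ‖z‖ := by
    simp [phase, map_div₀, Complex.div_re, Complex.normSq_apply, Complex.mul_re,
      Complex.conj_re, Complex.conj_im]
    field_simp
    ring
  rw [hcre]
  simp only [ContinuousLinearMap.add_apply, ContinuousLinearMap.smul_apply,
    ContinuousLinearMap.id_apply, ContinuousLinearMap.smulRight_apply,
    ContinuousLinearMap.coe_smul', Pi.smul_apply, Complex.reCLM_apply, Complex.imCLM_apply,
    hsa, phase]
  apply Complex.ext <;>
    simp [Complex.real_smul, Complex.div_re, Complex.div_im, Complex.normSq_apply,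
      Complex.add_re, Complex.add_im, Complex.mul_re, Complex.mul_im, smul_eq_mul,
      ← Complex.ofReal_pow] <;>
    field_simp <;> ring

lemma phase_mul_conj (z : ℂ) (hz : z ≠ 0) : phase z * (starRingEnd ℂ) (phase z) = 1 := by
  have ha : ‖z‖ ≠ 0 := by simpa using hz
  rw [Complex.mul_conj]
  rw [show Complex.normSq (phase z) = 1 by
    rw [phase, Complex.normSq_div, Complex.normSq_ofReal, Complex.normSq_eq_norm_sq]
    field_simp]
  norm_num

lemma key (z : ℂ) (hz : z ≠ 0) (c : ℝ) (w : ℂ) :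
    (c : ℂ) * phaseD z w
      = Complex.I * (phase z *
          (((c / ‖z‖ : ℝ) : ℂ) * ((((starRingEnd ℂ) (phase z) * w).im : ℝ) : ℂ))) := by
  have ha : ‖z‖ ≠ 0 := by simpa using hz
  rw [phaseD_apply]
  set v := (starRingEnd ℂ) (phase z) * w with hv
  have hw : w = phase z * v := by
    rw [hv, ← mul_assoc, phase_mul_conj z hz, one_mul]
  have hvi : v - ((v.re : ℝ) : ℂ) = Complex.I * ((v.im : ℝ) : ℂ) := by
    apply Complex.ext <;> simp
  calc (c : ℂ) * (((‖z‖ : ℝ) : ℂ)⁻¹ * (w - phase z * ((v.re : ℝ) : ℂ)))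
      = (c : ℂ) * (((‖z‖ : ℝ) : ℂ)⁻¹ * (phase z * (v - ((v.re : ℝ) : ℂ)))) := by
        rw [hw]; ring
    _ = _ := by
        rw [hvi]
        push_cast [div_eq_mul_inv]
        ring

/-- The matrix operator `w ↦ Aadj (Aadjᴴ w)` as an `ℝ`-CLM. -/
noncomputable def Mclm {N n : ℕ} (Aadj : Matrix (Fin N) (Fin n) ℂ) :
    (Fin N → ℂ) →L[ℝ] (Fin N → ℂ) :=
  LinearMap.toContinuousLinearMap
    (((Aadj.mulVecLin).comp (Aadjᴴ.mulVecLin)).restrictScalars ℝ)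

@[simp] lemma Mclm_apply {N n : ℕ} (Aadj : Matrix (Fin N) (Fin n) ℂ) (v : Fin N → ℂ) :
    Mclm Aadj v = Aadj.mulVec (Aadjᴴ.mulVec v) := by
  simp [Mclm]

lemma Mclm_smul {N n : ℕ} (Aadj : Matrix (Fin N) (Fin n) ℂ) (c : ℂ) (v : Fin N → ℂ) :
    Mclm Aadj (c • v) = c • Mclm Aadj v := by
  simp [Mclm_apply, Matrix.mulVec_smul]

lemma hasFDerivAt_comp_phase {N : ℕ} (c : Fin N → ℂ) (y : Fin N → ℂ) (hy : ∀ j, y j ≠ 0) :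
    HasFDerivAt (fun (x : Fin N → ℂ) (j : Fin N) => c j * phase (x j))
      (ContinuousLinearMap.pi fun j =>
        (c j • phaseD (y j)).comp (ContinuousLinearMap.proj j)) y :=
  hasFDerivAt_pi.2 fun j =>
    HasFDerivAt.comp (g := fun w => c j * phase w) (f := fun x : Fin N → ℂ => x j) y
      ((hasFDerivAt_phase (y j) (hy j)).const_mul (c j)) (hasFDerivAt_apply j y)

/-- `S_f` is Fréchet differentiable over `ℝ` at every vector with nonvanishing components,
with derivative `η ↦ Ω [(I − B*B)v + i(2B*B − I)((b/|y|) ⊙ Im v)]`, `v = conj(ω) ⊙ η`. -/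
theorem stmt1 (N n : ℕ) (Aadj : Matrix (Fin N) (Fin n) ℂ) (hiso : Aadjᴴ * Aadj = 1)
    (b : Fin N → ℝ) (hb : ∀ j, 0 < b j)
    (y : Fin N → ℂ) (hy : ∀ j, y j ≠ 0) :
    ∃ L : (Fin N → ℂ) →L[ℝ] (Fin N → ℂ),
      HasFDerivAt (Sf Aadj b) L y ∧
      ∀ η : Fin N → ℂ, L η = fun j =>
        phase (y j) *
          ((((starRingEnd ℂ) (phase (y j)) * η j)
              - BstarB Aadj (fun i => phase (y i))
                  (fun i => (starRingEnd ℂ) (phase (y i)) * η i) j)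
            + Complex.I *
              (2 * BstarB Aadj (fun i => phase (y i))
                    (fun i => ((b i / ‖y i‖ : ℝ) : ℂ) *
                      ((((starRingEnd ℂ) (phase (y i)) * η i).im : ℝ) : ℂ)) j
                - ((b j / ‖y j‖ : ℝ) : ℂ) *
                    ((((starRingEnd ℂ) (phase (y j)) * η j).im : ℝ) : ℂ))) := by
  set c2 : Fin N → ℂ := fun i => 2 * (b i : ℂ) with hc2
  set bc : Fin N → ℂ := fun j => (b j : ℂ) with hbc
  set D2 : (Fin N → ℂ) →L[ℝ] (Fin N → ℂ) :=
    ContinuousLinearMap.pi fun i => (c2 i • phaseD (y i)).comp (ContinuousLinearMap.proj i)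
    with hD2
  set D3 : (Fin N → ℂ) →L[ℝ] (Fin N → ℂ) :=
    ContinuousLinearMap.pi fun j => (bc j • phaseD (y j)).comp (ContinuousLinearMap.proj j)
    with hD3
  refine ⟨(ContinuousLinearMap.id ℝ (Fin N → ℂ)
      + (Mclm Aadj).comp (D2 - ContinuousLinearMap.id ℝ (Fin N → ℂ))) - D3, ?_, ?_⟩
  · have hP := hasFDerivAt_comp_phase c2 y hy
    have hQ := hasFDerivAt_comp_phase bc y hy
    have h := ((hasFDerivAt_id y).add
      ((Mclm Aadj).hasFDerivAt.comp y (hP.sub (hasFDerivAt_id y)))).sub hQ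
    have hfun : Sf Aadj b = fun x =>
        (x + Mclm Aadj ((fun j => c2 j * phase (x j)) - x)) - fun j => bc j * phase (x j) := by
      funext x j
      simp only [Sf, Mclm_apply, Pi.add_apply, Pi.sub_apply]
      rw [show ((fun j => c2 j * phase (x j)) - x) = (fun i => 2 * (b i : ℂ) * phase (x i) - x i)
        from funext fun i => by simp [hc2]]
    rw [hfun]
    exact h
  · intro η
    funext j
    have hφ : ∀ i, phase (y i) * ((starRingEnd ℂ) (phase (y i)) * η i) = η i := fun i => by
      rw [← mul_assoc, phase_mul_conj (y i) (hy i), one_mul]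
    set u : Fin N → ℂ := fun i => ((b i / ‖y i‖ : ℝ) : ℂ) *
      ((((starRingEnd ℂ) (phase (y i)) * η i).im : ℝ) : ℂ) with hu
    have hkey : ∀ i, (b i : ℂ) * phaseD (y i) (η i)
        = Complex.I * (phase (y i) * u i) := fun i => key (y i) (hy i) (b i) (η i)
    have hD2η : D2 η = fun i => c2 i * phaseD (y i) (η i) := by
      funext i
      simp [hD2, smul_eq_mul]
    have hD3η : D3 η = fun j => bc j * phaseD (y j) (η j) := by
      funext j
      simp [hD3, smul_eq_mul]
    have harg : D2 η - η = ((2 * Complex.I : ℂ) • fun i => phase (y i) * u i) - η := by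
      funext i
      simp only [Pi.sub_apply, Pi.smul_apply, smul_eq_mul, hD2η]
      rw [hc2]
      have : 2 * (b i : ℂ) * phaseD (y i) (η i) = 2 * ((b i : ℂ) * phaseD (y i) (η i)) := by
        ring
      rw [this, hkey i]
      ring
    have hM : Mclm Aadj (D2 η - η)
        = (2 * Complex.I : ℂ) • Mclm Aadj (fun i => phase (y i) * u i) - Mclm Aadj η := by
      rw [harg, map_sub, Mclm_smul]
    have hveq : (fun i => phase (y i) * ((starRingEnd ℂ) (phase (y i)) * η i)) = η := by
      funext i; exact hφ i
    simp only [ContinuousLinearMap.sub_apply, ContinuousLinearMap.add_apply,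
      ContinuousLinearMap.id_apply, ContinuousLinearMap.coe_comp', Function.comp_apply,
      Pi.sub_apply, Pi.add_apply, hM, hD3η, BstarB, hveq]
    rw [hbc]
    rw [hkey j]
    have h1 : phase (y j) * (starRingEnd ℂ) (phase (y j)) = 1 := phase_mul_conj (y j) (hy j)
    simp only [Pi.smul_apply, Pi.sub_apply, smul_eq_mul, Mclm_apply, hu]
    set M1 := Aadj.mulVec (Aadjᴴ.mulVec fun i => phase (y i) *
      (((b i / ‖y i‖ : ℝ) : ℂ) *
        ((((starRingEnd ℂ) (phase (y i)) * η i).im : ℝ) : ℂ))) j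
    set M2 := Aadj.mulVec (Aadjᴴ.mulVec η) j
    linear_combination (M2 - η j - 2 * Complex.I * M1) * h1
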